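/- The Černý automaton C_n with n states 0,...,n−1 and two letters a, b, where a maps state 0 to 1 and fixes all other states, and b maps each state i to i+1 mod n, has a synchronizing word of length (n−1)². -/
import Mathlib

inductive Letter : Type
  | a : Letter
  | b : Letter
deriving DecidableEq

def cernyStep (n : ℕ) : ZMod n → Letter → ZMod n
  | i, Letter.a => if i = 0 then 1 else i
  | i, Letter.b => i + 1

lemma foldb (n j : ℕ) (p : ZMod n) :
    List.foldl (cernyStep n) p (List.replicate j Letter.b) = p + j := by
  induction j generalizing p with
  | zero => simp
  | succ j ih =>
      rw [List.replicate_succ, List.foldl_cons, ih]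
      push_cast
      show p + 1 + j = _
      ring

lemma keylem (n : ℕ) (hn : 2 ≤ n) (k : ℕ) (hk : k ≤ n - 2) (p : ZMod n) :
    ∃ m : ℕ, 1 ≤ m ∧ m ≤ n - 1 - k ∧
      List.foldl (cernyStep n)
        p (Letter.a :: (List.replicate k
          (List.replicate (n-1) Letter.b ++ [Letter.a])).flatten) = (m : ZMod n) := by
  haveI : NeZero n := ⟨by omega⟩
  induction k with
  | zero =>
      simp only [List.replicate_zero, List.flatten_nil, List.foldl_cons, List.foldl_nil]
      by_cases hp : p = 0
      · exact ⟨1, le_refl _, by omega, by simp [cernyStep, hp]⟩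
      · refine ⟨p.val, ?_, ?_, ?_⟩
        · have := (ZMod.val_eq_zero p).not.mpr hp; omega
        · have := ZMod.val_lt p; omega
        · simp [cernyStep, hp, ZMod.natCast_val, ZMod.cast_id]
  | succ k ih =>
      obtain ⟨m, hm1, hm2, hfold⟩ := ih (by omega)
      rw [List.replicate_succ', List.flatten_append, ← List.cons_append,
        List.foldl_append, hfold]
      simp only [List.flatten_cons, List.flatten_nil, List.append_nil, List.foldl_append, foldb]
      have hcast : (m : ZMod n) + (↑(n-1) : ℕ) = ((m - 1 : ℕ) : ZMod n) := by
        have : ((m - 1 + n : ℕ) : ZMod n) = ((m - 1 : ℕ) : ZMod n) := by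
          push_cast; simp
        rw [← this]
        have : m - 1 + n = m + (n - 1) := by omega
        rw [this]; push_cast; ring
      rw [hcast]
      rcases eq_or_lt_of_le hm1 with h1 | h1
      · refine ⟨1, le_refl _, by omega, ?_⟩
        simp [cernyStep, ← h1]
      · have hne : ((m - 1 : ℕ) : ZMod n) ≠ 0 := by
          intro h
          have := (ZMod.natCast_eq_zero_iff _ _).mp h
          have := Nat.le_of_dvd (by omega) this
          omega
        refine ⟨m - 1, by omega, by omega, ?_⟩
        simp [cernyStep, hne]

/-- The Černý automaton `C n` has a synchronizing word of length `(n-1)^2`. -/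
theorem stmt5 (n : ℕ) (hn : 2 ≤ n) :
    ∃ w : List Letter, w.length = (n - 1) ^ 2 ∧
      ∃ q0 : ZMod n, ∀ p : ZMod n, w.foldl (cernyStep n) p = q0 := by
  refine ⟨Letter.a :: (List.replicate (n-2)
      (List.replicate (n-1) Letter.b ++ [Letter.a])).flatten, ?_, 1, ?_⟩
  · simp only [List.length_cons, List.length_flatten, List.map_replicate,
      List.length_append, List.length_replicate]
    simp
    obtain ⟨m, rfl⟩ := Nat.exists_eq_add_of_le hn
    simp [Nat.add_sub_cancel_left]
    ring_nf
  · intro p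
    obtain ⟨m, hm1, hm2, hfold⟩ := keylem n hn (n - 2) (le_refl _) p
    have : m = 1 := by omega
    rw [hfold, this, Nat.cast_one]
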